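/- Let ⟨Z_n,{a,b}⟩ be a standardized DFA, r ≠ 0 with r·a = dupl(a), D₁ the difference set, H₁ = ⟨D₁⟩. Then ⟨r⟩ ⊆ D₁ ∪ {0} ⊆ H₁, and moreover D₁ ∪ {0} is invariant under the action of a. -/

import Mathlib

def act {n : ℕ} (a : ZMod n → ZMod n) (q : ZMod n) (c : Bool) : ZMod n :=
  if c then q + 1 else a q

def wact {n : ℕ} (a : ZMod n → ZMod n) (w : List Bool) (q : ZMod n) : ZMod n :=
  w.foldl (act a) q

def excl {n : ℕ} (a : ZMod n → ZMod n) (w : List Bool) : Set (ZMod n) :=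
  {q | ∀ p, wact a w p ≠ q}

def dupl {n : ℕ} (a : ZMod n → ZMod n) (w : List Bool) : Set (ZMod n) :=
  {p | ∃ q₁ q₂, q₁ ≠ q₂ ∧ wact a w q₁ = p ∧ wact a w q₂ = p}

def CompletelyReachable {n : ℕ} (a : ZMod n → ZMod n) : Prop :=
  ∀ S : Set (ZMod n), S.Nonempty → ∃ w : List Bool, Set.range (wact a w) = S

def Standardized {n : ℕ} (a : ZMod n → ZMod n) : Prop :=
  Set.range a = {(0 : ZMod n)}ᶜ ∧ ∃ r : ZMod n, r ≠ 0 ∧ a r = a 0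

def RysEdge {n : ℕ} (a : ZMod n → ZMod n) (q p : ZMod n) : Prop :=
  ∃ w : List Bool, excl a w = {q} ∧ dupl a w = {p}

def D1 {n : ℕ} (a : ZMod n → ZMod n) : Set (ZMod n) :=
  {p | RysEdge a 0 p}

/-! ### Auxiliary lemmas -/

/-- `Pre a w p`: word `w` has image `{0}ᶜ` and a unique collision, with duplicate state `p`. -/
def Pre {n : ℕ} (a : ZMod n → ZMod n) (w : List Bool) (p : ZMod n) : Prop :=
  (∀ q, wact a w q ≠ 0) ∧ (∀ x : ZMod n, x ≠ 0 → ∃ q, wact a w q = x) ∧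
  (∃ c₁ c₂, c₁ ≠ c₂ ∧ wact a w c₁ = p ∧ wact a w c₂ = p) ∧
  (∀ q₁ q₂, q₁ ≠ q₂ → wact a w q₁ = wact a w q₂ → wact a w q₁ = p)

lemma wact_append {n : ℕ} (a : ZMod n → ZMod n) (w v : List Bool) (q : ZMod n) :
    wact a (w ++ v) q = wact a v (wact a w q) := by
  simp [wact, List.foldl_append]

lemma wact_replicate_true {n : ℕ} (a : ZMod n → ZMod n) (m : ℕ) (q : ZMod n) :
    wact a (List.replicate m true) q = q + m := by
  induction m generalizing q with
  | zero => simp [wact]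
  | succ k ih =>
    rw [List.replicate_succ]
    show wact a (true :: List.replicate k true) q = _
    have : wact a (true :: List.replicate k true) q
        = wact a (List.replicate k true) (q + 1) := rfl
    rw [this, ih]
    push_cast
    ring

lemma wact_single_false {n : ℕ} (a : ZMod n → ZMod n) (q : ZMod n) :
    wact a [false] q = a q := rfl

lemma pre_iff {n : ℕ} (a : ZMod n → ZMod n) (w : List Bool) (p : ZMod n) :
    Pre a w p ↔ (excl a w = {(0 : ZMod n)} ∧ dupl a w = {p}) := by
  constructor
  · rintro ⟨h0, hsurj, ⟨c₁, c₂, hc, hc1, hc2⟩, huniq⟩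
    constructor
    · ext q
      simp only [excl, Set.mem_setOf_eq, Set.mem_singleton_iff]
      constructor
      · intro h
        by_contra hq
        obtain ⟨s, hs⟩ := hsurj q hq
        exact h s hs
      · rintro rfl; exact h0
    · ext x
      simp only [dupl, Set.mem_setOf_eq, Set.mem_singleton_iff]
      constructor
      · rintro ⟨q₁, q₂, hq, h1', h2'⟩
        have := huniq q₁ q₂ hq (h1'.trans h2'.symm)
        rw [h1'] at this; exact this
      · rintro rfl; exact ⟨c₁, c₂, hc, hc1, hc2⟩
  · rintro ⟨he, hd⟩
    have h0 : ∀ q, wact a w q ≠ 0 := by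
      have : (0 : ZMod n) ∈ excl a w := by rw [he]; rfl
      intro q hq; exact this q hq
    refine ⟨h0, ?_, ?_, ?_⟩
    · intro x hx
      have : x ∉ excl a w := by rw [he]; simpa using hx
      simp only [excl, Set.mem_setOf_eq, not_forall, not_not] at this
      exact this
    · have : p ∈ dupl a w := by rw [hd]; rfl
      exact this
    · intro q₁ q₂ hq heq
      have : wact a w q₁ ∈ dupl a w := ⟨q₁, q₂, hq, rfl, heq.symm⟩
      rw [hd] at this; exact this

lemma pre_mem_D1 {n : ℕ} {a : ZMod n → ZMod n} {w : List Bool} {p : ZMod n}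
    (h : Pre a w p) : p ∈ D1 a := by
  rw [pre_iff] at h
  exact ⟨w, h.1, h.2⟩

lemma mem_D1_pre {n : ℕ} {a : ZMod n → ZMod n} {p : ZMod n} (h : p ∈ D1 a) :
    ∃ w, Pre a w p := by
  obtain ⟨w, hw⟩ := h
  exact ⟨w, (pre_iff a w p).2 hw⟩

section Main

variable {n : ℕ} (hn : 2 ≤ n) (a : ZMod n → ZMod n)
  (h1 : Set.range a = {(0 : ZMod n)}ᶜ)
  (r : ZMod n) (hr : r ≠ 0) (hra : a r = a 0)

include h1 in
lemma a_ne_zero : ∀ x, a x ≠ 0 := by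
  intro x
  have : a x ∈ Set.range a := ⟨x, rfl⟩
  rw [h1] at this
  simpa using this

include h1 in
lemma a_surj : ∀ x : ZMod n, x ≠ 0 → ∃ y, a y = x := by
  intro x hx
  have : x ∈ Set.range a := by rw [h1]; simpa using hx
  exact this

include hn h1 r hr hra in
lemma a_inj' : ∀ x y, x ≠ r → y ≠ r → a x = a y → x = y := by
  haveI : NeZero n := ⟨by omega⟩
  have e2 : {x : ZMod n // x ≠ r} ≃ {x : ZMod n // x ≠ 0} :=
    { toFun := fun x => ⟨x.1 - r, sub_ne_zero.2 x.2⟩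
      invFun := fun x => ⟨x.1 + r, by
        intro h; apply x.2; rwa [← eq_sub_iff_add_eq, sub_self] at h⟩
      left_inv := fun x => by simp
      right_inv := fun x => by simp }
  set f : {x : ZMod n // x ≠ r} → {x : ZMod n // x ≠ 0} :=
    fun x => ⟨a x.1, a_ne_zero a h1 x.1⟩ with hf
  have hsurj : Function.Surjective f := by
    rintro ⟨v, hv⟩
    obtain ⟨y, hy⟩ := a_surj a h1 v hv
    by_cases hyr : y = r
    · exact ⟨⟨0, fun h => hr h.symm⟩, by
        simp only [hf, Subtype.mk_eq_mk]
        rw [← hy, hyr, hra]⟩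
    · exact ⟨⟨y, hyr⟩, by simp only [hf, Subtype.mk_eq_mk]; exact hy⟩
  have hcard : Fintype.card {x : ZMod n // x ≠ r} = Fintype.card {x : ZMod n // x ≠ 0} :=
    Fintype.card_congr e2
  have hbij : Function.Bijective f :=
    (Fintype.bijective_iff_surjective_and_card f).2 ⟨hsurj, hcard⟩
  intro x y hx hy hxy
  have := hbij.1 (a₁ := ⟨x, hx⟩) (a₂ := ⟨y, hy⟩) (by simp only [hf, Subtype.mk_eq_mk]; exact hxy)
  exact Subtype.mk_eq_mk.1 this

include hn h1 r hr hra in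
lemma a_inj0 : ∀ x y, x ≠ 0 → y ≠ 0 → a x = a y → x = y := by
  intro x y hx hy hxy
  by_cases hxr : x = r
  · by_cases hyr : y = r
    · rw [hxr, hyr]
    · have h2 : a y = a 0 := by rw [← hxy, hxr, hra]
      exact absurd (a_inj' hn a h1 r hr hra y 0 hyr (fun h => hr h.symm) h2) hy
  · by_cases hyr : y = r
    · have h2 : a x = a 0 := by rw [hxy, hyr, hra]
      exact absurd (a_inj' hn a h1 r hr hra x 0 hxr (fun h => hr h.symm) h2) hx
    · exact a_inj' hn a h1 r hr hra x y hxr hyr hxy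

include hn h1 r hr hra in
lemma a_collision : ∀ x y, x ≠ y → a x = a y → a x = a 0 := by
  intro x y hxy h
  by_cases hx : x = 0
  · rw [hx]
  · by_cases hy : y = 0
    · rw [h, hy]
    · exact absurd (a_inj0 hn a h1 r hr hra x y hx hy h) hxy

include hn h1 r hr hra in
lemma pre_base : Pre a [false] (a 0) := by
  refine ⟨?_, ?_, ?_, ?_⟩
  · intro q; exact a_ne_zero a h1 q
  · intro x hx; exact a_surj a h1 x hx
  · exact ⟨r, 0, hr, by rw [wact_single_false, hra], rfl⟩
  · intro q₁ q₂ hq heq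
    exact a_collision hn a h1 r hr hra q₁ q₂ hq heq

include hn h1 r hr hra in
lemma pre_push {w : List Bool} {p : ZMod n} (h : Pre a w p) :
    Pre a (w ++ [false]) (a p) := by
  obtain ⟨h0, hsurj, ⟨c₁, c₂, hc, hc1, hc2⟩, huniq⟩ := h
  refine ⟨?_, ?_, ?_, ?_⟩
  · intro q; rw [wact_append]; exact a_ne_zero a h1 _
  · intro x hx
    obtain ⟨y, hy⟩ := a_surj a h1 x hx
    by_cases hy0 : y = 0
    · obtain ⟨q, hq⟩ := hsurj r hr
      exact ⟨q, by rw [wact_append, wact_single_false, hq, hra, ← hy0, hy]⟩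
    · obtain ⟨q, hq⟩ := hsurj y hy0
      exact ⟨q, by rw [wact_append, wact_single_false, hq, hy]⟩
  · exact ⟨c₁, c₂, hc, by rw [wact_append, wact_single_false, hc1],
      by rw [wact_append, wact_single_false, hc2]⟩
  · intro q₁ q₂ hq heq
    rw [wact_append, wact_single_false, wact_append, wact_single_false] at heq
    rw [wact_append, wact_single_false]
    by_cases hw : wact a w q₁ = wact a w q₂
    · rw [huniq q₁ q₂ hq hw]
    · exact absurd (a_inj0 hn a h1 r hr hra _ _ (h0 q₁) (h0 q₂) heq) hw

include hn h1 r hr hra in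
lemma pre_shift {w : List Bool} {p : ZMod n} (h : Pre a w p) :
    Pre a (w ++ List.replicate r.val true ++ [false]) (a (p + r)) := by
  haveI : NeZero n := ⟨by omega⟩
  obtain ⟨h0, hsurj, ⟨c₁, c₂, hc, hc1, hc2⟩, huniq⟩ := h
  have hval : ((r.val : ℕ) : ZMod n) = r := by rw [ZMod.natCast_val, ZMod.cast_id]
  have key : ∀ q, wact a (w ++ List.replicate r.val true ++ [false]) q
      = a (wact a w q + r) := by
    intro q
    rw [wact_append, wact_append, wact_single_false, wact_replicate_true, hval]
  refine ⟨?_, ?_, ?_, ?_⟩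
  · intro q; rw [key]; exact a_ne_zero a h1 _
  · intro x hx
    obtain ⟨y, hy⟩ := a_surj a h1 x hx
    by_cases hyr : y = r
    · obtain ⟨q, hq⟩ := hsurj (-r) (neg_ne_zero.2 hr)
      refine ⟨q, ?_⟩
      rw [key, hq, neg_add_cancel, ← hra, ← hyr, hy]
    · have : y - r ≠ 0 := sub_ne_zero.2 hyr
      obtain ⟨q, hq⟩ := hsurj (y - r) this
      refine ⟨q, ?_⟩
      rw [key, hq, sub_add_cancel, hy]
  · exact ⟨c₁, c₂, hc, by rw [key, hc1], by rw [key, hc2]⟩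
  · intro q₁ q₂ hq heq
    rw [key q₁, key q₂] at heq
    rw [key q₁]
    have hne : ∀ q', wact a w q' + r ≠ r := by
      intro q' h'
      exact h0 q' (by rwa [add_eq_right] at h')
    have h2 := a_inj' hn a h1 r hr hra _ _ (hne q₁) (hne q₂) heq
    have hw : wact a w q₁ = wact a w q₂ := add_right_cancel h2
    rw [huniq q₁ q₂ hq hw]

include hn h1 r hr hra in
lemma D1_push {p : ZMod n} (h : p ∈ D1 a) : a p ∈ D1 a := by
  obtain ⟨w, hw⟩ := mem_D1_pre h
  exact pre_mem_D1 (pre_push hn a h1 r hr hra hw)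

include hn h1 r hr hra in
lemma D1_pull {y : ZMod n} (hy : y ≠ 0) (h : a y ∈ D1 a) : y ∈ D1 a := by
  haveI : NeZero n := ⟨by omega⟩
  set f : {x : ZMod n // x ≠ (0 : ZMod n)} → {x : ZMod n // x ≠ (0 : ZMod n)} :=
    fun x => ⟨a x.1, a_ne_zero a h1 x.1⟩ with hf
  have hinj : Function.Injective f := by
    rintro ⟨x, hx⟩ ⟨z, hz⟩ hxz
    simp only [hf, Subtype.mk_eq_mk] at hxz ⊢
    exact a_inj0 hn a h1 r hr hra x z hx hz hxz
  have hbij : Function.Bijective f := Finite.injective_iff_bijective.1 hinj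
  set σ : Equiv.Perm {x : ZMod n // x ≠ (0 : ZMod n)} := Equiv.ofBijective f hbij with hσ
  have hσap : ∀ x, (σ x).1 = a x.1 := fun x => rfl
  have hiter : ∀ (k : ℕ) (x : {x : ZMod n // x ≠ (0 : ZMod n)}),
      x.1 ∈ D1 a → ((σ ^ k) x).1 ∈ D1 a := by
    intro k
    induction k with
    | zero => intro x hx; simpa using hx
    | succ m ih =>
      intro x hx
      rw [pow_succ', Equiv.Perm.mul_apply, hσap]
      exact D1_push hn a h1 r hr hra (ih x hx)
  set m := orderOf σ with hm
  have hm1 : 1 ≤ m := orderOf_pos σ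
  have hmm : σ ^ m = 1 := pow_orderOf_eq_one σ
  have key : (σ ^ (m - 1)) (σ ⟨y, hy⟩) = ⟨y, hy⟩ := by
    rw [← Equiv.Perm.mul_apply, ← pow_succ, Nat.sub_add_cancel hm1, hmm]
    rfl
  have : ((σ ^ (m - 1)) (σ ⟨y, hy⟩)).1 ∈ D1 a := by
    apply hiter
    rw [hσap]
    exact h
  rwa [key] at this

include hn h1 r hr hra in
lemma r_mem_D1 : r ∈ D1 a := by
  apply D1_pull hn a h1 r hr hra hr
  rw [hra]
  exact pre_mem_D1 (pre_base hn a h1 r hr hra)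

include hn h1 r hr hra in
lemma add_r_mem {x : ZMod n} (hx : x ∈ D1 a ∪ {0}) : x + r ∈ D1 a ∪ {0} := by
  by_cases hxr : x + r = 0
  · right; exact hxr
  · left
    rcases hx with hx | hx
    · -- x ∈ D1
      obtain ⟨w, hw⟩ := mem_D1_pre hx
      have := pre_mem_D1 (pre_shift hn a h1 r hr hra hw)
      exact D1_pull hn a h1 r hr hra hxr this
    · -- x = 0
      have hx0 : x = 0 := hx
      rw [hx0, zero_add]
      exact r_mem_D1 hn a h1 r hr hra

end Main

theorem inclusions_and_invariance {n : ℕ} (hn : 2 ≤ n) (a : ZMod n → ZMod n)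
    (h1 : Set.range a = {(0 : ZMod n)}ᶜ)
    (r : ZMod n) (hr : r ≠ 0) (hra : a r = a 0) :
    (AddSubgroup.closure {r} : Set (ZMod n)) ⊆ D1 a ∪ {0} ∧
    D1 a ∪ {0} ⊆ (AddSubgroup.closure (D1 a) : Set (ZMod n)) ∧
    (∀ d ∈ D1 a ∪ {0}, a d ∈ D1 a ∪ {0}) := by
  haveI : NeZero n := ⟨by omega⟩
  refine ⟨?_, ?_, ?_⟩
  · intro x hx
    rw [SetLike.mem_coe, AddSubgroup.mem_closure_singleton] at hx
    obtain ⟨k, hk⟩ := hx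
    have hnat : ∀ m : ℕ, (m • r : ZMod n) ∈ D1 a ∪ {0} := by
      intro m
      induction m with
      | zero => right; simp
      | succ j ih =>
        rw [succ_nsmul]
        exact add_r_mem hn a h1 r hr hra ih
    have hzk : k • r = (((k : ZMod n)).val : ℕ) • r := by
      rw [zsmul_eq_mul, nsmul_eq_mul, ZMod.natCast_val, ZMod.cast_id]
    rw [← hk, hzk]
    exact hnat _
  · intro x hx
    rcases hx with hx | hx
    · exact AddSubgroup.subset_closure hx
    · have : x = 0 := hx
      rw [this]
      exact (AddSubgroup.closure (D1 a)).zero_mem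
  · intro d hd
    rcases hd with hd | hd
    · left; exact D1_push hn a h1 r hr hra hd
    · left
      have : d = 0 := hd
      rw [this]
      exact pre_mem_D1 (pre_base hn a h1 r hr hra)
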